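/- The singular braid monoid SB_n decomposes as a semidirect product SB_n = M(Ω̂) ⋊ B_n, where M(Ω̂) is the graph monoid on the vertex set Υ̂ = {α δ_i α⁻¹ : α ∈ B_n, 1 ≤ i ≤ n−1} with edges given by commuting pairs in SB_n, and B_n acts on M(Ω̂) by conjugation. -/

import Mathlib

/-- The braid relations on `n - 1` generators `σ₁, …, σ_{n-1}` (indexed by `Fin (n-1)`). -/
def braidRels (n : ℕ) : Set (FreeGroup (Fin (n - 1))) :=
  {r | ∃ i j : Fin (n - 1),
    ((i : ℕ) + 1 < (j : ℕ) ∧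
      r = FreeGroup.of i * FreeGroup.of j * (FreeGroup.of i)⁻¹ * (FreeGroup.of j)⁻¹) ∨
    ((i : ℕ) + 1 = (j : ℕ) ∧
      r = FreeGroup.of i * FreeGroup.of j * FreeGroup.of i *
        (FreeGroup.of j * FreeGroup.of i * FreeGroup.of j)⁻¹)}

/-- The braid group `B_n` on `n` strings. -/
abbrev BraidGroup (n : ℕ) := PresentedGroup (braidRels n)

/-- The standard generator `σ_i` of the braid group. -/
def braidGen {n : ℕ} (i : Fin (n - 1)) : BraidGroup n := PresentedGroup.of i

/-- `σ_k` for a natural number index `k` (`= 1` out of range). -/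
def braidGen' (n : ℕ) (k : ℕ) : BraidGroup n :=
  if h : k < n - 1 then braidGen ⟨k, h⟩ else 1

/-- The standard pure braid generator (0-indexed):
`A i j = σ_{j-1} ⋯ σ_{i+1} σ_i² σ_{i+1}⁻¹ ⋯ σ_{j-1}⁻¹` for `0 ≤ i < j < n`. -/
def pureGen (n : ℕ) (i j : ℕ) : BraidGroup n :=
  (((List.range (j - i - 1)).map (fun t => braidGen' n (j - 1 - t))).prod) *
    (braidGen' n i) ^ 2 *
    (((List.range (j - i - 1)).map (fun t => braidGen' n (j - 1 - t))).prod)⁻¹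

/-- The transposition `(i, i+1)` of `Fin n`. -/
def adjSwap (n : ℕ) (i : Fin (n - 1)) : Equiv.Perm (Fin n) :=
  Equiv.swap ⟨i.1, by have := i.isLt; omega⟩ ⟨i.1 + 1, by have := i.isLt; omega⟩

/-- The conjugacy class `Υ_{ij} = {β A_{ij} β⁻¹ ; β ∈ PB_n}` of `A i j` under the
pure braid group, the latter presented as the kernel of `θ : B_n → Sym_n`. -/
def conjClassA (n : ℕ) (θ : BraidGroup n →* Equiv.Perm (Fin n)) (i j : ℕ) :
    Set (BraidGroup n) :=
  {u | ∃ β ∈ θ.ker, u = β * pureGen n i j * β⁻¹}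

/-- `Υ`: the set of all conjugates of the `σ_i²` in the braid group. -/
def UpsilonSet (n : ℕ) : Set (BraidGroup n) :=
  {u | ∃ (α : BraidGroup n) (i : Fin (n - 1)), u = α * (braidGen i) ^ 2 * α⁻¹}

/-- The commutation graph on a subset `S` of a monoid: two distinct elements are
adjacent iff they commute. -/
def commGraph {M : Type*} [Monoid M] (S : Set M) : SimpleGraph S where
  Adj u v := u ≠ v ∧ (u : M) * v = (v : M) * u
  symm := ⟨fun u v h => ⟨h.1.symm, h.2.symm⟩⟩
  loopless := ⟨fun u h => h.1 rfl⟩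

/-- Generators of the singular braid monoid: `σ_i`, `σ_i⁻¹`, `τ_i`. -/
inductive SBGen (n : ℕ)
  | s (i : Fin (n - 1))
  | sInv (i : Fin (n - 1))
  | t (i : Fin (n - 1))

open FreeMonoid in
/-- The defining relations of the singular braid monoid `SB_n`. -/
inductive SBRel (n : ℕ) : FreeMonoid (SBGen n) → FreeMonoid (SBGen n) → Prop
  | inv_right (i) : SBRel n (of (.s i) * of (.sInv i)) 1
  | inv_left (i) : SBRel n (of (.sInv i) * of (.s i)) 1
  | sigma_tau (i) : SBRel n (of (.s i) * of (.t i)) (of (.t i) * of (.s i))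
  | comm_ss (i j : Fin (n - 1)) (h : (i : ℕ) + 1 < j ∨ (j : ℕ) + 1 < i) :
      SBRel n (of (.s i) * of (.s j)) (of (.s j) * of (.s i))
  | comm_st (i j : Fin (n - 1)) (h : (i : ℕ) + 1 < j ∨ (j : ℕ) + 1 < i) :
      SBRel n (of (.s i) * of (.t j)) (of (.t j) * of (.s i))
  | comm_tt (i j : Fin (n - 1)) (h : (i : ℕ) + 1 < j ∨ (j : ℕ) + 1 < i) :
      SBRel n (of (.t i) * of (.t j)) (of (.t j) * of (.t i))
  | braid (i j : Fin (n - 1)) (h : (i : ℕ) + 1 = j ∨ (j : ℕ) + 1 = i) :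
      SBRel n (of (.s i) * of (.s j) * of (.s i)) (of (.s j) * of (.s i) * of (.s j))
  | braid_tau (i j : Fin (n - 1)) (h : (i : ℕ) + 1 = j ∨ (j : ℕ) + 1 = i) :
      SBRel n (of (.s i) * of (.s j) * of (.t i)) (of (.t j) * of (.s i) * of (.s j))

/-- The singular braid monoid `SB_n`. -/
abbrev SingularBraidMonoid (n : ℕ) := (conGen (SBRel n)).Quotient

/-- The generator `σ_i` of `SB_n`. -/
def sbSigma {n : ℕ} (i : Fin (n - 1)) : SingularBraidMonoid n :=
  (conGen (SBRel n)).mk' (FreeMonoid.of (.s i))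

/-- The generator `σ_i⁻¹` of `SB_n`. -/
def sbSigmaInv {n : ℕ} (i : Fin (n - 1)) : SingularBraidMonoid n :=
  (conGen (SBRel n)).mk' (FreeMonoid.of (.sInv i))

/-- The generator `τ_i` of `SB_n`. -/
def sbTau {n : ℕ} (i : Fin (n - 1)) : SingularBraidMonoid n :=
  (conGen (SBRel n)).mk' (FreeMonoid.of (.t i))

/-- `δ_i = σ_i τ_i`. -/
def sbDelta {n : ℕ} (i : Fin (n - 1)) : SingularBraidMonoid n := sbSigma i * sbTau i

/-- The congruence on the free monoid over the vertices of a simple graph `G`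
generated by the commutation relations `xy = yx` for adjacent `x, y`. -/
def graphMonoidCon {X : Type*} (G : SimpleGraph X) : Con (FreeMonoid X) :=
  conGen (fun a b => ∃ x y, G.Adj x y ∧
    a = FreeMonoid.of x * FreeMonoid.of y ∧ b = FreeMonoid.of y * FreeMonoid.of x)

/-- The graph monoid (free partially commutative monoid) of a simple graph. -/
abbrev GraphMonoid {X : Type*} (G : SimpleGraph X) := (graphMonoidCon G).Quotient


namespace SBAux

section SDP
structure SDP {M B : Type*} [Monoid M] [Monoid B] (φ : B →* Monoid.End M) where
  m : M
  b : B

namespace SDP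
variable {M B : Type*} [Monoid M] [Monoid B] {φ : B →* Monoid.End M}

instance : Mul (SDP φ) := ⟨fun p q => ⟨p.m * φ p.b q.m, p.b * q.b⟩⟩
instance : One (SDP φ) := ⟨⟨1, 1⟩⟩

@[simp] lemma mul_m (p q : SDP φ) : (p * q).m = p.m * φ p.b q.m := rfl
@[simp] lemma mul_b (p q : SDP φ) : (p * q).b = p.b * q.b := rfl
@[simp] lemma one_m : (1 : SDP φ).m = 1 := rfl
@[simp] lemma one_b : (1 : SDP φ).b = 1 := rfl

@[ext] lemma ext {p q : SDP φ} (h1 : p.m = q.m) (h2 : p.b = q.b) : p = q := by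
  cases p; cases q; cases h1; cases h2; rfl

lemma end_mul_apply (f g : Monoid.End M) (x : M) : (f * g) x = f (g x) := rfl

instance : Monoid (SDP φ) where
  mul_assoc p q r := by
    ext
    · simp [map_mul, end_mul_apply, mul_assoc]
    · simp [mul_assoc]
  one_mul p := by ext <;> simp [Monoid.End.coe_one]
  mul_one p := by ext <;> simp [Monoid.End.coe_one]

end SDP
end SDP

section Generic
variable {α N : Type*} [Monoid N]

lemma quot_hom_ext {c : Con (FreeMonoid α)} {f g : c.Quotient →* N}
    (h : ∀ x : α, f (c.mk' (FreeMonoid.of x)) = g (c.mk' (FreeMonoid.of x))) : f = g := by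
  have key : f.comp c.mk' = g.comp c.mk' := FreeMonoid.hom_eq h
  apply MonoidHom.ext; intro x
  obtain ⟨w, rfl⟩ := Con.mk'_surjective x
  exact DFunLike.congr_fun key w

def quotLift {r : FreeMonoid α → FreeMonoid α → Prop} (f : α → N)
    (h : ∀ a b, r a b → FreeMonoid.lift f a = FreeMonoid.lift f b) :
    (conGen r).Quotient →* N :=
  Con.lift _ (FreeMonoid.lift f) (Con.conGen_le.2 fun a b hab => (Con.ker_rel _).2 (h a b hab))

@[simp] lemma quotLift_of {r : FreeMonoid α → FreeMonoid α → Prop} (f : α → N)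
    (h : ∀ a b, r a b → FreeMonoid.lift f a = FreeMonoid.lift f b) (x : α) :
    quotLift f h ((conGen r).mk' (FreeMonoid.of x)) = f x := by
  simp [quotLift, Con.lift_mk']

lemma quot_rel {r : FreeMonoid α → FreeMonoid α → Prop} {a b : FreeMonoid α} (h : r a b) :
    (conGen r).mk' a = (conGen r).mk' b :=
  (Con.eq _).2 (ConGen.Rel.of a b h)

end Generic

section Braid
variable {n : ℕ}

lemma braid_rel_one {r : FreeGroup (Fin (n-1))} (hr : r ∈ braidRels n) :
    PresentedGroup.mk (braidRels n) r = 1 :=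
  (QuotientGroup.eq_one_iff _).2 (Subgroup.subset_normalClosure hr)

lemma braidGen_eq (i : Fin (n-1)) :
    braidGen i = PresentedGroup.mk (braidRels n) (FreeGroup.of i) := rfl

lemma braid_commute' {i j : Fin (n-1)} (h : (i:ℕ)+1 < j) :
    Commute (braidGen (n := n) i) (braidGen j) := by
  have h1 := braid_rel_one (n := n)
    (r := FreeGroup.of i * FreeGroup.of j * (FreeGroup.of i)⁻¹ * (FreeGroup.of j)⁻¹)
    ⟨i, j, Or.inl ⟨h, rfl⟩⟩
  simp only [map_mul, map_inv] at h1
  rw [braidGen_eq, braidGen_eq]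
  exact commutatorElement_eq_one_iff_commute.1 h1

lemma braid_commute {i j : Fin (n-1)} (h : (i:ℕ)+1 < j ∨ (j:ℕ)+1 < i) :
    Commute (braidGen (n := n) i) (braidGen j) := by
  rcases h with h | h
  · exact braid_commute' h
  · exact (braid_commute' h).symm

lemma braid_braid' {i j : Fin (n-1)} (h : (i:ℕ)+1 = j) :
    braidGen (n := n) i * braidGen j * braidGen i = braidGen j * braidGen i * braidGen j := by
  have h1 := braid_rel_one (n := n)
    (r := FreeGroup.of i * FreeGroup.of j * FreeGroup.of i *
      (FreeGroup.of j * FreeGroup.of i * FreeGroup.of j)⁻¹)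
    ⟨i, j, Or.inr ⟨h, rfl⟩⟩
  simp only [map_mul, map_inv] at h1
  rw [braidGen_eq, braidGen_eq]
  exact mul_inv_eq_one.1 h1

lemma braid_braid {i j : Fin (n-1)} (h : (i:ℕ)+1 = j ∨ (j:ℕ)+1 = i) :
    braidGen (n := n) i * braidGen j * braidGen i = braidGen j * braidGen i * braidGen j := by
  rcases h with h | h
  · exact braid_braid' h
  · exact (braid_braid' h).symm

/-- Hom extensionality for the braid group into a monoid. -/
lemma braid_hom_ext {N : Type*} [Monoid N] {f g : BraidGroup n →* N}
    (h : ∀ i, f (braidGen i) = g (braidGen i)) : f = g := by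
  have key : f.toHomUnits = g.toHomUnits :=
    PresentedGroup.ext fun x => Units.ext (by
      simpa [MonoidHom.coe_toHomUnits, braidGen] using h x)
  ext x
  calc f x = ↑(f.toHomUnits x) := (f.coe_toHomUnits x).symm
    _ = ↑(g.toHomUnits x) := by rw [key]
    _ = g x := g.coe_toHomUnits x

end Braid
end SBAux

namespace SBAux
section SB
variable {n : ℕ}

lemma smk_s (i : Fin (n-1)) :
    (conGen (SBRel n)).mk' (FreeMonoid.of (.s i)) = sbSigma i := rfl
lemma smk_sInv (i : Fin (n-1)) :
    (conGen (SBRel n)).mk' (FreeMonoid.of (.sInv i)) = sbSigmaInv i := rfl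
lemma smk_t (i : Fin (n-1)) :
    (conGen (SBRel n)).mk' (FreeMonoid.of (.t i)) = sbTau i := rfl

lemma sb_rel {a b : FreeMonoid (SBGen n)} (h : SBRel n a b) :
    (conGen (SBRel n)).mk' a = (conGen (SBRel n)).mk' b := quot_rel h

lemma sb_sigma_sigmaInv (i : Fin (n-1)) : sbSigma (n := n) i * sbSigmaInv i = 1 := by
  have := sb_rel (SBRel.inv_right (n := n) i)
  simpa [map_mul, map_one, smk_s, smk_sInv] using this

lemma sb_sigmaInv_sigma (i : Fin (n-1)) : sbSigmaInv (n := n) i * sbSigma i = 1 := by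
  have := sb_rel (SBRel.inv_left (n := n) i)
  simpa [map_mul, map_one, smk_s, smk_sInv] using this

lemma sb_sigma_tau (i : Fin (n-1)) : sbSigma (n := n) i * sbTau i = sbTau i * sbSigma i := by
  have := sb_rel (SBRel.sigma_tau (n := n) i)
  simpa [map_mul, smk_s, smk_t] using this

lemma sb_comm_ss {i j : Fin (n-1)} (h : (i:ℕ)+1 < j ∨ (j:ℕ)+1 < i) :
    sbSigma (n := n) i * sbSigma j = sbSigma j * sbSigma i := by
  have := sb_rel (SBRel.comm_ss (n := n) i j h)
  simpa [map_mul, smk_s] using this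

lemma sb_comm_st {i j : Fin (n-1)} (h : (i:ℕ)+1 < j ∨ (j:ℕ)+1 < i) :
    sbSigma (n := n) i * sbTau j = sbTau j * sbSigma i := by
  have := sb_rel (SBRel.comm_st (n := n) i j h)
  simpa [map_mul, smk_s, smk_t] using this

lemma sb_comm_tt {i j : Fin (n-1)} (h : (i:ℕ)+1 < j ∨ (j:ℕ)+1 < i) :
    sbTau (n := n) i * sbTau j = sbTau j * sbTau i := by
  have := sb_rel (SBRel.comm_tt (n := n) i j h)
  simpa [map_mul, smk_t] using this

lemma sb_braid {i j : Fin (n-1)} (h : (i:ℕ)+1 = j ∨ (j:ℕ)+1 = i) :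
    sbSigma (n := n) i * sbSigma j * sbSigma i = sbSigma j * sbSigma i * sbSigma j := by
  have := sb_rel (SBRel.braid (n := n) i j h)
  simpa [map_mul, smk_s] using this

lemma sb_braid_tau {i j : Fin (n-1)} (h : (i:ℕ)+1 = j ∨ (j:ℕ)+1 = i) :
    sbSigma (n := n) i * sbSigma j * sbTau i = sbTau j * sbSigma i * sbSigma j := by
  have := sb_rel (SBRel.braid_tau (n := n) i j h)
  simpa [map_mul, smk_s, smk_t] using this

/- derived delta lemmas -/

lemma sb_sigma_delta (i : Fin (n-1)) :
    Commute (sbSigma (n := n) i) (sbDelta i) :=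
  (Commute.refl _).mul_right (show Commute _ _ from sb_sigma_tau i)

lemma sb_sigma_delta_distant {i j : Fin (n-1)} (h : (i:ℕ)+1 < j ∨ (j:ℕ)+1 < i) :
    Commute (sbSigma (n := n) i) (sbDelta j) :=
  Commute.mul_right (show Commute _ _ from sb_comm_ss h) (show Commute _ _ from sb_comm_st h)

lemma sb_tau_delta_distant {i j : Fin (n-1)} (h : (i:ℕ)+1 < j ∨ (j:ℕ)+1 < i) :
    Commute (sbTau (n := n) i) (sbDelta j) :=
  Commute.mul_right (Commute.symm (show Commute _ _ from sb_comm_st h.symm))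
    (show Commute _ _ from sb_comm_tt h)

lemma sb_delta_delta_distant {i j : Fin (n-1)} (h : (i:ℕ)+1 < j ∨ (j:ℕ)+1 < i) :
    Commute (sbDelta (n := n) i) (sbDelta j) :=
  Commute.mul_left (sb_sigma_delta_distant h) (sb_tau_delta_distant h)

lemma sb_braid_delta {i j : Fin (n-1)} (h : (i:ℕ)+1 = j ∨ (j:ℕ)+1 = i) :
    sbSigma (n := n) i * sbSigma j * sbDelta i = sbDelta j * (sbSigma i * sbSigma j) := by
  calc sbSigma i * sbSigma j * sbDelta i
      = sbSigma i * sbSigma j * (sbTau i * sbSigma i) := by rw [sbDelta, sb_sigma_tau]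
    _ = sbSigma i * sbSigma j * sbTau i * sbSigma i := by rw [mul_assoc (sbSigma i * sbSigma j)]
    _ = sbTau j * sbSigma i * sbSigma j * sbSigma i := by rw [sb_braid_tau h]
    _ = sbTau j * (sbSigma i * sbSigma j * sbSigma i) := by simp only [mul_assoc]
    _ = sbTau j * (sbSigma j * sbSigma i * sbSigma j) := by rw [sb_braid h]
    _ = sbTau j * sbSigma j * (sbSigma i * sbSigma j) := by simp only [mul_assoc]
    _ = sbSigma j * sbTau j * (sbSigma i * sbSigma j) := by rw [← sb_sigma_tau]
    _ = sbDelta j * (sbSigma i * sbSigma j) := by rw [sbDelta]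

end SB
end SBAux

namespace SBAux
section W
variable {n : ℕ}

lemma end_apply {M : Type*} [Monoid M] (f g : Monoid.End M) (x : M) : (f * g) x = f (g x) := rfl

/-- swaps with disjoint supports commute -/
lemma swap_commute {β : Type*} [DecidableEq β] {x y z w : β}
    (hxz : x ≠ z) (hxw : x ≠ w) (hyz : y ≠ z) (hyw : y ≠ w) :
    Commute (Equiv.swap x y) (Equiv.swap z w) := by
  refine Equiv.Perm.Disjoint.commute (fun a => ?_)
  by_cases h1 : a = x ∨ a = y
  · right
    rcases h1 with rfl | rfl
    · exact Equiv.swap_apply_of_ne_of_ne hxz hxw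
    · exact Equiv.swap_apply_of_ne_of_ne hyz hyw
  · left
    push_neg at h1
    exact Equiv.swap_apply_of_ne_of_ne h1.1 h1.2

lemma swap_braid {β : Type*} [DecidableEq β] {x y z : β}
    (hxy : x ≠ y) (hyz : y ≠ z) (hxz : x ≠ z) :
    Equiv.swap x y * Equiv.swap y z * Equiv.swap x y
      = Equiv.swap y z * Equiv.swap x y * Equiv.swap y z := by
  have h1 : Equiv.swap y z * Equiv.swap x y * Equiv.swap y z = Equiv.swap z x :=
    Equiv.swap_mul_swap_mul_swap hxy hxz
  have h2 : Equiv.swap y x * Equiv.swap z y * Equiv.swap y x = Equiv.swap x z :=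
    Equiv.swap_mul_swap_mul_swap (Ne.symm hyz) (Ne.symm hxz)
  rw [Equiv.swap_comm y x, Equiv.swap_comm z y] at h2
  rw [h1, h2, Equiv.swap_comm]

def fa (i : Fin (n-1)) : Fin n := ⟨i.1, by have := i.isLt; omega⟩
def fb (i : Fin (n-1)) : Fin n := ⟨i.1+1, by have := i.isLt; omega⟩
def swp (i : Fin (n-1)) : Equiv.Perm (Fin n) := Equiv.swap (fa i) (fb i)
def pr (i : Fin (n-1)) : Sym2 (Fin n) := s(fa i, fb i)

lemma fa_ne_fb (i : Fin (n-1)) : fa (n := n) i ≠ fb i := by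
  simp [fa, fb, Fin.ext_iff]

abbrev MSet (n : ℕ) := Multiplicative (Multiset (Sym2 (Fin n)))

def mapEnd (e : Equiv.Perm (Fin n)) : Monoid.End (MSet n) where
  toFun s := Multiplicative.ofAdd ((Multiplicative.toAdd s).map (Sym2.map e))
  map_one' := rfl
  map_mul' x y := by
    show Multiplicative.ofAdd ((Multiplicative.toAdd x + Multiplicative.toAdd y).map _) = _
    rw [Multiset.map_add]
    rfl

def phiW : Equiv.Perm (Fin n) →* Monoid.End (MSet n) where
  toFun := mapEnd
  map_one' := MonoidHom.ext fun s => by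
    show Multiplicative.ofAdd ((Multiplicative.toAdd s).map (Sym2.map (1 : Equiv.Perm (Fin n)))) = s
    have : Sym2.map (⇑(1 : Equiv.Perm (Fin n))) = id := by
      funext z
      induction z using Sym2.ind with
      | _ a b => simp
    rw [this, Multiset.map_id]
    rfl
  map_mul' e f := MonoidHom.ext fun s => by
    show Multiplicative.ofAdd ((Multiplicative.toAdd s).map (Sym2.map ⇑(e * f)))
      = (mapEnd e * mapEnd f) s
    rw [end_apply]
    show _ = Multiplicative.ofAdd
      (((Multiplicative.toAdd s).map (Sym2.map ⇑f)).map (Sym2.map ⇑e))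
    rw [Multiset.map_map]
    congr 1
    apply Multiset.map_congr rfl
    intro z _
    rw [Function.comp_apply, Sym2.map_map]
    rfl

lemma phiW_apply (e : Equiv.Perm (Fin n)) (s : Multiset (Sym2 (Fin n))) :
    phiW e (Multiplicative.ofAdd s) = Multiplicative.ofAdd (s.map (Sym2.map e)) := rfl

lemma phiW_single (e : Equiv.Perm (Fin n)) (z : Sym2 (Fin n)) :
    phiW e (Multiplicative.ofAdd {z}) = Multiplicative.ofAdd {Sym2.map e z} := by
  rw [phiW_apply, Multiset.map_singleton]

def wgen : SBGen n → SDP (phiW (n := n))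
  | .s i => ⟨1, swp i⟩
  | .sInv i => ⟨1, swp i⟩
  | .t i => ⟨Multiplicative.ofAdd {pr i}, swp i⟩

end W
end SBAux

namespace SBAux
section W2
variable {n : ℕ}

lemma swp_commute_distant {i j : Fin (n-1)} (h : (i:ℕ)+1 < j ∨ (j:ℕ)+1 < i) :
    Commute (swp (n := n) i) (swp j) := by
  apply swap_commute <;> (simp [fa, fb, Fin.ext_iff]; omega)

lemma sym2_swp_pr (i : Fin (n-1)) : Sym2.map (swp (n := n) i) (pr i) = pr i := by
  rw [pr, Sym2.map_pair_eq, swp, Equiv.swap_apply_left, Equiv.swap_apply_right, Sym2.eq_swap]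

lemma sym2_swp_pr_distant {i j : Fin (n-1)} (h : (i:ℕ)+1 < j ∨ (j:ℕ)+1 < i) :
    Sym2.map (swp (n := n) i) (pr j) = pr j := by
  rw [pr, Sym2.map_pair_eq, swp, Equiv.swap_apply_of_ne_of_ne, Equiv.swap_apply_of_ne_of_ne]
    <;> (simp [fa, fb, Fin.ext_iff]; omega)

lemma swp_braid {i j : Fin (n-1)} (h : (i:ℕ)+1 = j ∨ (j:ℕ)+1 = i) :
    swp (n := n) i * swp j * swp i = swp j * swp i * swp j := by
  rcases h with h | h
  · have hba : fb (n := n) i = fa j := by simp [fa, fb, Fin.ext_iff]; omega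
    rw [swp, swp, hba]
    exact swap_braid (by simp [fa, fb, Fin.ext_iff]; omega) (by simp [fa, fb, Fin.ext_iff])
      (by simp [fa, fb, Fin.ext_iff]; omega)
  · have hba : fb (n := n) j = fa i := by simp [fa, fb, Fin.ext_iff]; omega
    rw [swp, swp, ← hba]
    exact (swap_braid (by simp [fa, fb, Fin.ext_iff]) (by simp [fa, fb, Fin.ext_iff]; omega)
      (by simp [fa, fb, Fin.ext_iff]; omega)).symm

lemma sym2_braid {i j : Fin (n-1)} (h : (i:ℕ)+1 = j ∨ (j:ℕ)+1 = i) :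
    Sym2.map ⇑(swp (n := n) i * swp j) (pr i) = pr j := by
  rw [pr, Sym2.map_pair_eq, Equiv.Perm.mul_apply, Equiv.Perm.mul_apply]
  rcases h with h | h
  · have hba : fb (n := n) i = fa j := by simp [fa, fb, Fin.ext_iff]; omega
    have e1 : (swp (n := n) j) (fa i) = fa i := by
      apply Equiv.swap_apply_of_ne_of_ne <;> (simp [fa, fb, Fin.ext_iff]; omega)
    have e2 : (swp (n := n) j) (fb i) = fb j := by
      rw [hba]; exact Equiv.swap_apply_left _ _
    have e3 : (swp (n := n) i) (fa i) = fb i := Equiv.swap_apply_left _ _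
    have e4 : (swp (n := n) i) (fb j) = fb j := by
      apply Equiv.swap_apply_of_ne_of_ne <;> (simp [fa, fb, Fin.ext_iff]; omega)
    rw [e1, e2, e3, e4, hba, pr]
  · have hba : fb (n := n) j = fa i := by simp [fa, fb, Fin.ext_iff]; omega
    have e1 : (swp (n := n) j) (fa i) = fa j := by
      rw [← hba]; exact Equiv.swap_apply_right _ _
    have e2 : (swp (n := n) j) (fb i) = fb i := by
      apply Equiv.swap_apply_of_ne_of_ne <;> (simp [fa, fb, Fin.ext_iff]; omega)
    have e3 : (swp (n := n) i) (fa j) = fa j := by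
      apply Equiv.swap_apply_of_ne_of_ne <;> (simp [fa, fb, Fin.ext_iff]; omega)
    have e4 : (swp (n := n) i) (fb i) = fa i := Equiv.swap_apply_right _ _
    rw [e1, e2, e3, e4, ← hba, pr, Sym2.eq_swap]

def PhiW : SingularBraidMonoid n →* SDP (phiW (n := n)) :=
  quotLift wgen (by
    intro a b hrel
    cases hrel with
    | inv_right i =>
      simp only [map_mul, map_one, FreeMonoid.lift_eval_of]
      show (⟨1, swp i⟩ : SDP (phiW (n := n))) * ⟨1, swp i⟩ = 1
      refine SDP.ext ?_ ?_
      · simp [map_one]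
      · simp [swp, Equiv.swap_mul_self]
    | inv_left i =>
      simp only [map_mul, map_one, FreeMonoid.lift_eval_of]
      show (⟨1, swp i⟩ : SDP (phiW (n := n))) * ⟨1, swp i⟩ = 1
      refine SDP.ext ?_ ?_
      · simp [map_one]
      · simp [swp, Equiv.swap_mul_self]
    | sigma_tau i =>
      simp only [map_mul, FreeMonoid.lift_eval_of]
      show (⟨1, swp i⟩ : SDP (phiW (n := n))) * ⟨Multiplicative.ofAdd {pr i}, swp i⟩
        = ⟨Multiplicative.ofAdd {pr i}, swp i⟩ * ⟨1, swp i⟩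
      refine SDP.ext ?_ ?_
      · simp [phiW_single, sym2_swp_pr, map_one]
      · rfl
    | comm_ss i j h =>
      simp only [map_mul, FreeMonoid.lift_eval_of]
      show (⟨1, swp i⟩ : SDP (phiW (n := n))) * ⟨1, swp j⟩ = ⟨1, swp j⟩ * ⟨1, swp i⟩
      refine SDP.ext ?_ ?_
      · simp [map_one]
      · exact swp_commute_distant h
    | comm_st i j h =>
      simp only [map_mul, FreeMonoid.lift_eval_of]
      show (⟨1, swp i⟩ : SDP (phiW (n := n))) * ⟨Multiplicative.ofAdd {pr j}, swp j⟩
        = ⟨Multiplicative.ofAdd {pr j}, swp j⟩ * ⟨1, swp i⟩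
      refine SDP.ext ?_ ?_
      · simp [phiW_single, sym2_swp_pr_distant h, map_one]
      · exact swp_commute_distant h
    | comm_tt i j h =>
      simp only [map_mul, FreeMonoid.lift_eval_of]
      show (⟨Multiplicative.ofAdd {pr i}, swp i⟩ : SDP (phiW (n := n)))
          * ⟨Multiplicative.ofAdd {pr j}, swp j⟩
        = ⟨Multiplicative.ofAdd {pr j}, swp j⟩ * ⟨Multiplicative.ofAdd {pr i}, swp i⟩
      refine SDP.ext ?_ ?_
      · have h' : (j:ℕ)+1 < i ∨ (i:ℕ)+1 < j := h.symm
        simp only [SDP.mul_m, phiW_single, sym2_swp_pr_distant h, sym2_swp_pr_distant h']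
        show Multiplicative.ofAdd ({pr i} + {pr j}) = Multiplicative.ofAdd ({pr j} + {pr i})
        rw [add_comm]
      · exact swp_commute_distant h
    | braid i j h =>
      simp only [map_mul, FreeMonoid.lift_eval_of]
      show (⟨1, swp i⟩ : SDP (phiW (n := n))) * ⟨1, swp j⟩ * ⟨1, swp i⟩
        = ⟨1, swp j⟩ * ⟨1, swp i⟩ * ⟨1, swp j⟩
      refine SDP.ext ?_ ?_
      · simp [map_one]
      · exact swp_braid h
    | braid_tau i j h =>
      simp only [map_mul, FreeMonoid.lift_eval_of]
      show (⟨1, swp i⟩ : SDP (phiW (n := n))) * ⟨1, swp j⟩ * ⟨Multiplicative.ofAdd {pr i}, swp i⟩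
        = ⟨Multiplicative.ofAdd {pr j}, swp j⟩ * ⟨1, swp i⟩ * ⟨1, swp j⟩
      refine SDP.ext ?_ ?_
      · simp only [SDP.mul_m, SDP.mul_b, map_one, mul_one, one_mul, map_mul, end_apply,
          phiW_single]
        rw [Sym2.map_map]
        have h2 : Sym2.map (⇑(swp (n := n) i) ∘ ⇑(swp j)) (pr i) = pr j := by
          rw [← Equiv.Perm.coe_mul]; exact sym2_braid h
        rw [h2]
      · show swp i * swp j * swp i = swp j * swp i * swp j
        exact swp_braid h)

lemma PhiW_sigma (i : Fin (n-1)) : PhiW (sbSigma (n := n) i) = ⟨1, swp i⟩ := by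
  rw [sbSigma]; exact quotLift_of _ _ _
lemma PhiW_tau (i : Fin (n-1)) :
    PhiW (sbTau (n := n) i) = ⟨Multiplicative.ofAdd {pr i}, swp i⟩ := by
  rw [sbTau]; exact quotLift_of _ _ _

lemma PhiW_delta (i : Fin (n-1)) :
    PhiW (sbDelta (n := n) i) = ⟨Multiplicative.ofAdd {pr i}, 1⟩ := by
  rw [sbDelta, map_mul, PhiW_sigma, PhiW_tau]
  refine SDP.ext ?_ ?_
  · simp [phiW_single, sym2_swp_pr, map_one]
  · simp [swp, Equiv.swap_mul_self]

lemma sb_delta_ne_distant {i j : Fin (n-1)} (h : (i:ℕ)+1 < j ∨ (j:ℕ)+1 < i) :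
    sbDelta (n := n) i ≠ sbDelta j := by
  intro he
  have := congrArg PhiW he
  rw [PhiW_delta, PhiW_delta] at this
  have hm := congrArg SDP.m this
  simp only at hm
  have : pr (n := n) i = pr j := by
    have := Multiplicative.ofAdd.injective hm
    simpa [Multiset.singleton_inj] using this
  rw [pr, pr, Sym2.eq_iff] at this
  rcases this with ⟨h1, h2⟩ | ⟨h1, h2⟩ <;>
    (simp [fa, fb, Fin.ext_iff] at h1 h2; omega)

end W2
end SBAux

namespace SBAux
section Main
variable {n : ℕ} (ι : BraidGroup n →* (SingularBraidMonoid n)ˣ)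

abbrev VSet : Set (SingularBraidMonoid n) :=
  {u : SingularBraidMonoid n | ∃ (α : BraidGroup n) (i : Fin (n - 1)),
    u = (ι α : SingularBraidMonoid n) * sbDelta i * ((ι α)⁻¹ : (SingularBraidMonoid n)ˣ)}

abbrev GM := GraphMonoid (commGraph (VSet ι))

def mkGM : FreeMonoid (VSet ι) →* GM ι := (graphMonoidCon (commGraph (VSet ι))).mk'

lemma mkGM_comm {u v : VSet ι} (h : (commGraph (VSet ι)).Adj u v) :
    mkGM ι (FreeMonoid.of u) * mkGM ι (FreeMonoid.of v)
      = mkGM ι (FreeMonoid.of v) * mkGM ι (FreeMonoid.of u) := by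
  rw [← map_mul, ← map_mul]
  exact quot_rel ⟨u, v, h, rfl, rfl⟩

def vconj (g : BraidGroup n) (u : VSet ι) : VSet ι :=
  ⟨(ι g : SingularBraidMonoid n) * u * ((ι g)⁻¹ : (SingularBraidMonoid n)ˣ), by
    obtain ⟨α, i, h⟩ := u.2
    exact ⟨g * α, i, by rw [h]; simp [map_mul, mul_inv_rev, Units.val_mul, mul_assoc]⟩⟩

lemma vconj_val (g : BraidGroup n) (u : VSet ι) :
    (vconj ι g u : SingularBraidMonoid n)
      = (ι g : SingularBraidMonoid n) * u * ((ι g)⁻¹ : (SingularBraidMonoid n)ˣ) := rfl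

lemma vconj_one (u : VSet ι) : vconj ι 1 u = u := Subtype.ext (by simp [vconj_val])

lemma vconj_mul (g h : BraidGroup n) (u : VSet ι) :
    vconj ι (g * h) u = vconj ι g (vconj ι h u) :=
  Subtype.ext (by simp [vconj_val, map_mul, mul_inv_rev, Units.val_mul, mul_assoc])

lemma vconj_inj (g : BraidGroup n) {u v : VSet ι} (h : vconj ι g u = vconj ι g v) : u = v := by
  have h1 : vconj ι g⁻¹ (vconj ι g u) = vconj ι g⁻¹ (vconj ι g v) := by rw [h]
  rwa [← vconj_mul, ← vconj_mul, inv_mul_cancel, vconj_one, vconj_one] at h1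

lemma conj_mul_conj (g : BraidGroup n) (x y : SingularBraidMonoid n) :
    ((ι g : SingularBraidMonoid n) * x * ((ι g)⁻¹ : (SingularBraidMonoid n)ˣ))
      * ((ι g : SingularBraidMonoid n) * y * ((ι g)⁻¹ : (SingularBraidMonoid n)ˣ))
    = (ι g : SingularBraidMonoid n) * (x * y) * ((ι g)⁻¹ : (SingularBraidMonoid n)ˣ) := by
  simp only [mul_assoc, Units.inv_mul_cancel_left]

lemma vconj_adj (g : BraidGroup n) {u v : VSet ι} (h : (commGraph (VSet ι)).Adj u v) :
    (commGraph (VSet ι)).Adj (vconj ι g u) (vconj ι g v) := by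
  refine ⟨fun he => h.1 (vconj_inj ι g he), ?_⟩
  rw [vconj_val, vconj_val, conj_mul_conj, conj_mul_conj, h.2]

def liftGM {N : Type*} [Monoid N] (f : VSet ι → N)
    (hf : ∀ u v : VSet ι, (commGraph (VSet ι)).Adj u v → f u * f v = f v * f u) :
    GM ι →* N :=
  quotLift f (by
    rintro a b ⟨x, y, hadj, rfl, rfl⟩
    rw [map_mul, map_mul]
    exact hf x y hadj)

lemma liftGM_of {N : Type*} [Monoid N] (f : VSet ι → N) (hf) (u : VSet ι) :
    liftGM ι f hf (mkGM ι (FreeMonoid.of u)) = f u :=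
  quotLift_of _ _ _

lemma gm_hom_ext {N : Type*} [Monoid N] {f g : GM ι →* N}
    (h : ∀ u, f (mkGM ι (FreeMonoid.of u)) = g (mkGM ι (FreeMonoid.of u))) : f = g :=
  quot_hom_ext h

def gphi (g : BraidGroup n) : Monoid.End (GM ι) :=
  liftGM ι (fun u => mkGM ι (FreeMonoid.of (vconj ι g u)))
    (fun u v hadj => mkGM_comm ι (vconj_adj ι g hadj))

lemma gphi_of (g : BraidGroup n) (u : VSet ι) :
    gphi ι g (mkGM ι (FreeMonoid.of u)) = mkGM ι (FreeMonoid.of (vconj ι g u)) :=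
  liftGM_of ι _ _ u

def Phi : BraidGroup n →* Monoid.End (GM ι) where
  toFun := gphi ι
  map_one' := gm_hom_ext ι (fun u => by
    show gphi ι 1 (mkGM ι (FreeMonoid.of u)) = _
    rw [gphi_of, vconj_one]; rfl)
  map_mul' g h := gm_hom_ext ι (fun u => by
    show gphi ι (g * h) (mkGM ι (FreeMonoid.of u))
      = (gphi ι g * gphi ι h) (mkGM ι (FreeMonoid.of u))
    rw [end_apply, gphi_of, gphi_of, gphi_of, ← vconj_mul])

lemma Phi_of (g : BraidGroup n) (u : VSet ι) :
    Phi ι g (mkGM ι (FreeMonoid.of u)) = mkGM ι (FreeMonoid.of (vconj ι g u)) :=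
  gphi_of ι g u

def vδ (i : Fin (n - 1)) : VSet ι := ⟨sbDelta i, 1, i, by simp⟩

end Main
end SBAux

namespace SBAux
section Main2
variable {n : ℕ} (ι : BraidGroup n →* (SingularBraidMonoid n)ˣ)
  (hι : ∀ i : Fin (n - 1),
    ((ι (braidGen i) : (SingularBraidMonoid n)ˣ) : SingularBraidMonoid n) = sbSigma i)

include hι in
lemma iota_inv_val (i : Fin (n - 1)) :
    (((ι (braidGen i))⁻¹ : (SingularBraidMonoid n)ˣ) : SingularBraidMonoid n) = sbSigmaInv i := by
  apply Units.inv_eq_of_mul_eq_one_right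
  rw [hι]
  exact sb_sigma_sigmaInv i

include hι in
lemma iota_geninv_val (i : Fin (n - 1)) :
    ((ι ((braidGen i)⁻¹) : (SingularBraidMonoid n)ˣ) : SingularBraidMonoid n) = sbSigmaInv i := by
  rw [map_inv]
  exact iota_inv_val ι hι i

include hι in
lemma iota_geninv_inv_val (i : Fin (n - 1)) :
    (((ι ((braidGen i)⁻¹))⁻¹ : (SingularBraidMonoid n)ˣ) : SingularBraidMonoid n) = sbSigma i := by
  rw [map_inv, inv_inv]
  exact hι i

/-- conjugation by `σ_i` fixes commuting elements -/
lemma sigma_conj {i : Fin (n - 1)} {x : SingularBraidMonoid n}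
    (hx : sbSigma i * x = x * sbSigma i) :
    sbSigma (n := n) i * x * sbSigmaInv i = x := by
  rw [hx, mul_assoc, sb_sigma_sigmaInv, mul_one]

lemma sigmaInv_conj {i : Fin (n - 1)} {x : SingularBraidMonoid n}
    (hx : sbSigma i * x = x * sbSigma i) :
    sbSigmaInv (n := n) i * x * sbSigma i = x := by
  rw [mul_assoc, ← hx, ← mul_assoc, sb_sigmaInv_sigma, one_mul]

include hι in
lemma vconj_gen_delta (i : Fin (n - 1)) : vconj ι (braidGen i) (vδ ι i) = vδ ι i := by
  apply Subtype.ext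
  rw [vconj_val, hι, iota_inv_val ι hι]
  exact sigma_conj (sb_sigma_delta i).eq

include hι in
lemma vconj_gen_delta_distant {i j : Fin (n - 1)} (h : (i:ℕ)+1 < j ∨ (j:ℕ)+1 < i) :
    vconj ι (braidGen i) (vδ ι j) = vδ ι j := by
  apply Subtype.ext
  rw [vconj_val, hι, iota_inv_val ι hι]
  exact sigma_conj (sb_sigma_delta_distant h).eq

include hι in
lemma vconj_geninv_delta_distant {i j : Fin (n - 1)} (h : (i:ℕ)+1 < j ∨ (j:ℕ)+1 < i) :
    vconj ι ((braidGen i)⁻¹) (vδ ι j) = vδ ι j := by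
  apply Subtype.ext
  rw [vconj_val, iota_geninv_val ι hι, iota_geninv_inv_val ι hι]
  exact sigmaInv_conj (sb_sigma_delta_distant h).eq

include hι in
lemma vconj_braid_delta {i j : Fin (n - 1)} (h : (i:ℕ)+1 = j ∨ (j:ℕ)+1 = i) :
    vconj ι (braidGen i * braidGen j) (vδ ι i) = vδ ι j := by
  apply Subtype.ext
  rw [vconj_val, map_mul, Units.val_mul, mul_inv_rev, Units.val_mul, hι, hι,
    iota_inv_val ι hι, iota_inv_val ι hι]
  show sbSigma i * sbSigma j * sbDelta i * (sbSigmaInv j * sbSigmaInv i) = sbDelta j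
  rw [sb_braid_delta h, mul_assoc, mul_assoc, ← mul_assoc (sbSigma j), sb_sigma_sigmaInv,
    one_mul, sb_sigma_sigmaInv, mul_one]

lemma delta_adj_distant {i j : Fin (n - 1)} (h : (i:ℕ)+1 < j ∨ (j:ℕ)+1 < i) :
    (commGraph (VSet ι)).Adj (vδ ι i) (vδ ι j) :=
  ⟨fun he => sb_delta_ne_distant h (congrArg Subtype.val he), (sb_delta_delta_distant h).eq⟩

lemma braid_conj {i j : Fin (n - 1)} (h : (i:ℕ)+1 = j ∨ (j:ℕ)+1 = i) :
    braidGen (n := n) i * braidGen j * (braidGen i)⁻¹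
      = (braidGen j)⁻¹ * (braidGen i * braidGen j) := by
  have hb := braid_braid h
  have h2 : braidGen (n := n) j * (braidGen i * braidGen j * (braidGen i)⁻¹)
      = braidGen i * braidGen j := by
    calc braidGen (n := n) j * (braidGen i * braidGen j * (braidGen i)⁻¹)
        = braidGen j * braidGen i * braidGen j * (braidGen i)⁻¹ := by simp only [mul_assoc]
      _ = braidGen i * braidGen j * braidGen i * (braidGen i)⁻¹ := by rw [← hb]
      _ = braidGen i * braidGen j := by rw [mul_assoc, mul_inv_cancel, mul_one]
  exact mul_left_cancel (by rw [h2, mul_inv_cancel_left])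

include hι in
def ggen : SBGen n → SDP (Phi ι)
  | .s i => ⟨1, braidGen i⟩
  | .sInv i => ⟨1, (braidGen i)⁻¹⟩
  | .t i => ⟨mkGM ι (FreeMonoid.of (vδ ι i)), (braidGen i)⁻¹⟩

include hι in
def G : SingularBraidMonoid n →* SDP (Phi ι) :=
  quotLift (ggen ι) (by
    intro a b hrel
    cases hrel with
    | inv_right i =>
      simp only [map_mul, map_one, FreeMonoid.lift_eval_of, ggen]
      refine SDP.ext ?_ ?_
      · simp [map_one]
      · simp
    | inv_left i =>
      simp only [map_mul, map_one, FreeMonoid.lift_eval_of, ggen]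
      refine SDP.ext ?_ ?_
      · simp [map_one]
      · simp
    | sigma_tau i =>
      simp only [map_mul, FreeMonoid.lift_eval_of, ggen]
      refine SDP.ext ?_ ?_
      · show 1 * (Phi ι (braidGen i)) (mkGM ι (FreeMonoid.of (vδ ι i)))
          = mkGM ι (FreeMonoid.of (vδ ι i)) * (Phi ι ((braidGen i)⁻¹)) 1
        rw [one_mul, map_one, mul_one, Phi_of, vconj_gen_delta ι hι]
      · simp
    | comm_ss i j h =>
      simp only [map_mul, FreeMonoid.lift_eval_of, ggen]
      refine SDP.ext ?_ ?_
      · simp [map_one]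
      · exact braid_commute h
    | comm_st i j h =>
      simp only [map_mul, FreeMonoid.lift_eval_of, ggen]
      refine SDP.ext ?_ ?_
      · show 1 * (Phi ι (braidGen i)) (mkGM ι (FreeMonoid.of (vδ ι j)))
          = mkGM ι (FreeMonoid.of (vδ ι j)) * (Phi ι ((braidGen j)⁻¹)) 1
        rw [one_mul, map_one, mul_one, Phi_of, vconj_gen_delta_distant ι hι h]
      · exact ((braid_commute h).inv_right).eq
    | comm_tt i j h =>
      simp only [map_mul, FreeMonoid.lift_eval_of, ggen]
      refine SDP.ext ?_ ?_
      · show mkGM ι (FreeMonoid.of (vδ ι i))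
            * (Phi ι ((braidGen i)⁻¹)) (mkGM ι (FreeMonoid.of (vδ ι j)))
          = mkGM ι (FreeMonoid.of (vδ ι j))
            * (Phi ι ((braidGen j)⁻¹)) (mkGM ι (FreeMonoid.of (vδ ι i)))
        rw [Phi_of, Phi_of, vconj_geninv_delta_distant ι hι h,
          vconj_geninv_delta_distant ι hι h.symm]
        exact mkGM_comm ι (delta_adj_distant ι h)
      · exact (((braid_commute h).inv_left).inv_right).eq
    | braid i j h =>
      simp only [map_mul, FreeMonoid.lift_eval_of, ggen]
      refine SDP.ext ?_ ?_
      · simp [map_one]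
      · exact braid_braid h
    | braid_tau i j h =>
      simp only [map_mul, FreeMonoid.lift_eval_of, ggen]
      refine SDP.ext ?_ ?_
      · show (1 * (Phi ι (braidGen i)) 1)
            * (Phi ι (braidGen i * braidGen j)) (mkGM ι (FreeMonoid.of (vδ ι i)))
          = mkGM ι (FreeMonoid.of (vδ ι j)) * (Phi ι ((braidGen j)⁻¹)) 1
            * (Phi ι ((braidGen j)⁻¹ * braidGen i)) 1
        rw [map_one, mul_one, map_one, map_one, mul_one, mul_one, one_mul, Phi_of,
          vconj_braid_delta ι hι h]
      · show braidGen i * braidGen j * (braidGen i)⁻¹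
          = (braidGen j)⁻¹ * braidGen i * braidGen j
        rw [braid_conj h, mul_assoc])

include hι in
lemma G_sigma (i : Fin (n - 1)) : G ι hι (sbSigma i) = ⟨1, braidGen i⟩ := by
  rw [sbSigma]; exact quotLift_of _ _ _
include hι in
lemma G_sigmaInv (i : Fin (n - 1)) : G ι hι (sbSigmaInv i) = ⟨1, (braidGen i)⁻¹⟩ := by
  rw [sbSigmaInv]; exact quotLift_of _ _ _
include hι in
lemma G_tau (i : Fin (n - 1)) :
    G ι hι (sbTau i) = ⟨mkGM ι (FreeMonoid.of (vδ ι i)), (braidGen i)⁻¹⟩ := by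
  rw [sbTau]; exact quotLift_of _ _ _

include hι in
lemma G_delta (i : Fin (n - 1)) :
    G ι hι (sbDelta i) = ⟨mkGM ι (FreeMonoid.of (vδ ι i)), 1⟩ := by
  rw [sbDelta, map_mul, G_sigma, G_tau]
  refine SDP.ext ?_ ?_
  · show 1 * (Phi ι (braidGen i)) (mkGM ι (FreeMonoid.of (vδ ι i)))
      = mkGM ι (FreeMonoid.of (vδ ι i))
    rw [one_mul, Phi_of, vconj_gen_delta ι hι]
  · simp

end Main2
end SBAux

namespace SBAux
section Main3
variable {n : ℕ} (ι : BraidGroup n →* (SingularBraidMonoid n)ˣ)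
  (hι : ∀ i : Fin (n - 1),
    ((ι (braidGen i) : (SingularBraidMonoid n)ˣ) : SingularBraidMonoid n) = sbSigma i)
  (embed : GM ι →* SingularBraidMonoid n)
  (hembed : ∀ u, embed (mkGM ι (FreeMonoid.of u)) = (u : SingularBraidMonoid n))

/-- conjugation by a unit, as a monoid hom -/
def uconj (u : (SingularBraidMonoid n)ˣ) : SingularBraidMonoid n →* SingularBraidMonoid n where
  toFun x := ↑u * x * ↑u⁻¹
  map_one' := by simp
  map_mul' x y := by simp only [mul_assoc, Units.inv_mul_cancel_left]

include hembed in
lemma embed_phi (g : BraidGroup n) (w : GM ι) :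
    embed (Phi ι g w) = ↑(ι g) * embed w * ↑((ι g)⁻¹) := by
  have key : embed.comp (Phi ι g : GM ι →* GM ι) = (uconj (ι g)).comp embed :=
    gm_hom_ext ι (fun u => by
      simp only [MonoidHom.comp_apply]
      show embed (Phi ι g (mkGM ι (FreeMonoid.of u))) = _
      rw [Phi_of, hembed, hembed, vconj_val]
      rfl)
  exact DFunLike.congr_fun key w

include hembed in
lemma embed_phi_mul (g : BraidGroup n) (w : GM ι) :
    embed (Phi ι g w) * ↑(ι g) = ↑(ι g) * embed w := by
  rw [embed_phi ι embed hembed, mul_assoc, Units.inv_mul, mul_one]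

def incB : BraidGroup n →* SDP (Phi ι) where
  toFun g := ⟨1, g⟩
  map_one' := rfl
  map_mul' g h := by
    refine SDP.ext ?_ ?_
    · show (1 : GM ι) = 1 * (Phi ι g) 1
      rw [map_one]
      show (1 : GM ι) = 1 * 1
      rw [mul_one]
    · rfl

def incM : GM ι →* SDP (Phi ι) where
  toFun w := ⟨w, 1⟩
  map_one' := rfl
  map_mul' w w' := by
    refine SDP.ext ?_ ?_
    · show w * w' = w * (Phi ι 1) w'
      rw [map_one]
      rfl
    · show (1 : BraidGroup n) = 1 * 1
      rw [mul_one]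

include hι in
lemma G_iota (g : BraidGroup n) :
    G ι hι ((ι g : (SingularBraidMonoid n)ˣ) : SingularBraidMonoid n) = ⟨1, g⟩ := by
  have key : (G ι hι).comp ((Units.coeHom (SingularBraidMonoid n)).comp ι) = incB ι :=
    braid_hom_ext (fun i => by
      simp only [MonoidHom.comp_apply, Units.coeHom_apply]
      rw [hι, G_sigma]
      rfl)
  exact DFunLike.congr_fun key g

include hι hembed in
lemma G_embed (w : GM ι) : G ι hι (embed w) = ⟨w, 1⟩ := by
  have key : (G ι hι).comp embed = incM ι := by
    apply gm_hom_ext ι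
    intro u
    obtain ⟨α, i, hu⟩ := u.2
    simp only [MonoidHom.comp_apply]
    rw [hembed]
    show G ι hι u.1 = incM ι (mkGM ι (FreeMonoid.of u))
    rw [hu, map_mul, map_mul, G_iota ι hι, G_delta ι hι, ← map_inv, G_iota ι hι]
    refine SDP.ext ?_ ?_
    · show (1 * (Phi ι α) (mkGM ι (FreeMonoid.of (vδ ι i)))) * (Phi ι (α * 1)) 1
        = mkGM ι (FreeMonoid.of u)
      rw [map_one, mul_one, one_mul, Phi_of]
      congr 2
      exact Subtype.ext (by rw [vconj_val]; exact hu.symm)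
    · show α * 1 * α⁻¹ = 1
      rw [mul_one, mul_inv_cancel]
  exact DFunLike.congr_fun key w

include hι hembed in
lemma G_F (w : GM ι) (g : BraidGroup n) :
    G ι hι (embed w * ↑(ι g)) = ⟨w, g⟩ := by
  rw [map_mul, G_embed ι hι embed hembed, G_iota ι hι]
  refine SDP.ext ?_ ?_
  · show w * (Phi ι 1) 1 = w
    rw [map_one]
    show w * 1 = w
    rw [mul_one]
  · show (1 : BraidGroup n) * g = g
    rw [one_mul]

lemma sb_delta_sigmaInv (i : Fin (n - 1)) :
    sbDelta (n := n) i * sbSigmaInv i = sbTau i := by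
  rw [sbDelta, sb_sigma_tau, mul_assoc, sb_sigma_sigmaInv, mul_one]

include hι hembed in
lemma F_surj (x : SingularBraidMonoid n) :
    ∃ p : GM ι × BraidGroup n, embed p.1 * ↑(ι p.2) = x := by
  induction x using Con.induction_on with
  | H w =>
  suffices h : ∀ v : FreeMonoid (SBGen n),
      ∃ p : GM ι × BraidGroup n, embed p.1 * ↑(ι p.2) = (conGen (SBRel n)).mk' v from h w
  intro v
  induction v using FreeMonoid.inductionOn' with
  | one =>
    exact ⟨⟨1, 1⟩, by rw [map_one, map_one, Units.val_one, mul_one, map_one]⟩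
  | of_mul y xs ih =>
    obtain ⟨⟨w, g⟩, hwg⟩ := ih
    rw [map_mul]
    cases y with
    | s i =>
      refine ⟨⟨Phi ι (braidGen i) w, braidGen i * g⟩, ?_⟩
      rw [map_mul ι, Units.val_mul, ← mul_assoc, embed_phi_mul ι embed hembed, hι, smk_s,
        mul_assoc, hwg]
    | sInv i =>
      refine ⟨⟨Phi ι ((braidGen i)⁻¹) w, (braidGen i)⁻¹ * g⟩, ?_⟩
      rw [map_mul ι, Units.val_mul, ← mul_assoc, embed_phi_mul ι embed hembed,
        iota_geninv_val ι hι, smk_sInv, mul_assoc, hwg]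
    | t i =>
      refine ⟨⟨mkGM ι (FreeMonoid.of (vδ ι i)) * Phi ι ((braidGen i)⁻¹) w,
        (braidGen i)⁻¹ * g⟩, ?_⟩
      rw [map_mul ι, Units.val_mul, map_mul embed, hembed]
      show (sbDelta i) * embed ((Phi ι ((braidGen i)⁻¹)) w)
          * (↑(ι (braidGen i)⁻¹) * ↑(ι g)) = _
      rw [← mul_assoc, mul_assoc (sbDelta i), embed_phi_mul ι embed hembed,
        iota_geninv_val ι hι, ← mul_assoc, sb_delta_sigmaInv, smk_t,
        mul_assoc, hwg]

end Main3
end SBAux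
/-- **Lemma 2.3.** `SB_n = M(Ω̂) ⋊ B_n`: writing `ι : B_n → SB_n` for the natural
embedding (valued in units) and `embed : M(Ω̂) → SB_n` for the natural multiplicative
map of the graph monoid on the commutation graph `Ω̂` of `Υ̂ = {α δ_i α⁻¹}`, the map
`(w, g) ↦ embed(w) · ι(g)` is a bijection `M(Ω̂) × B_n → SB_n`. (Note that `Υ̂` is
invariant under conjugation by `B_n`, so this is exactly the semidirect product
decomposition.) -/
theorem singularBraidMonoid_semidirect (n : ℕ)
    (ι : BraidGroup n →* (SingularBraidMonoid n)ˣ)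
    (hι : ∀ i : Fin (n - 1),
      ((ι (braidGen i) : (SingularBraidMonoid n)ˣ) : SingularBraidMonoid n) = sbSigma i)
    (embed : GraphMonoid (commGraph
        {u : SingularBraidMonoid n | ∃ (α : BraidGroup n) (i : Fin (n - 1)),
          u = (ι α : SingularBraidMonoid n) * sbDelta i * ((ι α)⁻¹ : (SingularBraidMonoid n)ˣ)}) →*
      SingularBraidMonoid n)
    (hembed : ∀ u, embed ((graphMonoidCon _).mk' (FreeMonoid.of u)) = (u : SingularBraidMonoid n)) :
    Function.Bijective (fun p : GraphMonoid (commGraph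
        {u : SingularBraidMonoid n | ∃ (α : BraidGroup n) (i : Fin (n - 1)),
          u = (ι α : SingularBraidMonoid n) * sbDelta i * ((ι α)⁻¹ : (SingularBraidMonoid n)ˣ)}) ×
        BraidGroup n =>
      embed p.1 * ((ι p.2 : (SingularBraidMonoid n)ˣ) : SingularBraidMonoid n)) := by
  constructor
  · intro p q h
    have h1 := (SBAux.G_F ι hι embed hembed p.1 p.2).symm.trans
      ((congrArg (SBAux.G ι hι) h).trans (SBAux.G_F ι hι embed hembed q.1 q.2))
    exact Prod.ext (congrArg SBAux.SDP.m h1) (congrArg SBAux.SDP.b h1)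
  · intro x
    exact SBAux.F_surj ι hι embed hembed x
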